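/- Let T be a tree (a connected acyclic finite simple graph) on n ≥ 1 vertices, let v be a vertex of T, and suppose F_1, …, F_n ∈ MvPowerSeries ℕ ℤ are symmetric power series satisfying Z_T^v(c) = Σ_{i=1}^n x_c^i · F_i for every color c ∈ ℕ. Then X_T = Σ_{i=1}^n p_i · F_i, where p_i is the i-th power-sum series. -/

import Mathlib

/-- A proper coloring of a simple graph by natural-number colors:
adjacent vertices receive distinct colors. -/
def SimpleGraph.IsProperNatColoring {V : Type} (G : SimpleGraph V) (κ : V → ℕ) : Prop :=
  ∀ ⦃u w : V⦄, G.Adj u w → κ u ≠ κ w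

/-- The chromatic symmetric function of `G`, as a formal power series in the
variables `(x_c)_{c : ℕ}` with integer coefficients: the coefficient on the
exponent vector `d : ℕ →₀ ℕ` is the number of proper colorings `κ` of `G`
with `|κ⁻¹(c)| = d c` for every color `c`. -/
noncomputable def csf {V : Type} (G : SimpleGraph V) : MvPowerSeries ℕ ℤ :=
  fun d => ((Set.ncard {κ : V → ℕ |
    G.IsProperNatColoring κ ∧ ∀ c : ℕ, (κ ⁻¹' {c}).ncard = d c} : ℕ) : ℤ)

/-- `Zcsf G v c` is the part of the chromatic symmetric function of `G`
counting only the proper colorings `κ` with `κ v = c`. -/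
noncomputable def Zcsf {V : Type} (G : SimpleGraph V) (v : V) (c : ℕ) : MvPowerSeries ℕ ℤ :=
  fun d => ((Set.ncard {κ : V → ℕ |
    G.IsProperNatColoring κ ∧ κ v = c ∧ ∀ c' : ℕ, (κ ⁻¹' {c'}).ncard = d c'} : ℕ) : ℤ)

/-- A formal power series in the variables `(x_c)_{c : ℕ}` is symmetric if its
coefficient function is invariant under every permutation of `ℕ` acting on
exponent vectors. -/
def MvPowerSeries.IsSymmetricFun (F : MvPowerSeries ℕ ℤ) : Prop :=
  ∀ (e : Equiv.Perm ℕ) (d : ℕ →₀ ℕ),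
    MvPowerSeries.coeff (Finsupp.equivMapDomain e d) F = MvPowerSeries.coeff d F

open Classical in
/-- The `i`-th power-sum symmetric function `p_i = Σ_c x_c^i`, as the power series
whose coefficient is `1` exactly on exponent vectors of the form `i·e_c`
(supported at a single color `c` with value `i`) and `0` elsewhere. -/
noncomputable def pSum (i : ℕ) : MvPowerSeries ℕ ℤ :=
  fun d => if ∃ c : ℕ, d = Finsupp.single c i then 1 else 0

/-- Coefficient of `pSum i * F`: sum over colors in the support with big enough value. -/
lemma coeff_pSum_mul (i : ℕ) (hi : 1 ≤ i) (F : MvPowerSeries ℕ ℤ) (d : ℕ →₀ ℕ) :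
    MvPowerSeries.coeff d (pSum i * F) =
      ∑ c ∈ d.support.filter (fun c => i ≤ d c),
        MvPowerSeries.coeff (d - Finsupp.single c i) F := by
  classical
  have hcoeff : ∀ a : ℕ →₀ ℕ, MvPowerSeries.coeff a (pSum i) =
      if ∃ c : ℕ, a = Finsupp.single c i then 1 else 0 := by
    intro a
    rfl
  rw [MvPowerSeries.coeff_mul]
  set A : Finset ((ℕ →₀ ℕ) × (ℕ →₀ ℕ)) :=
    (d.support.filter (fun c => i ≤ d c)).image
      (fun c => (Finsupp.single c i, d - Finsupp.single c i)) with hA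
  have hsub : A ⊆ Finset.HasAntidiagonal.antidiagonal d := by
    intro p hp
    simp only [hA, Finset.mem_image, Finset.mem_filter, Finsupp.mem_support_iff] at hp
    obtain ⟨c, ⟨-, hci⟩, rfl⟩ := hp
    rw [Finset.HasAntidiagonal.mem_antidiagonal]
    exact add_tsub_cancel_of_le (Finsupp.single_le_iff.mpr hci)
  rw [← Finset.sum_subset hsub]
  · rw [Finset.sum_image]
    · refine Finset.sum_congr rfl fun c hc => ?_
      rw [hcoeff, if_pos ⟨c, rfl⟩, one_mul]
    · intro c _ c' _ h
      have h1 := congrArg (fun p => p.1 c) h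
      simp only [Finsupp.single_eq_same] at h1
      by_contra hne
      rw [show ((Finsupp.single c' i : ℕ →₀ ℕ) c) = 0 from
        Finsupp.single_eq_of_ne (fun h' => hne h')] at h1
      omega
  · intro p hp hpA
    rw [hcoeff]
    split_ifs with h
    · obtain ⟨c, hc⟩ := h
      exfalso
      apply hpA
      have hpd := Finset.HasAntidiagonal.mem_antidiagonal.mp hp
      have hle : Finsupp.single c i ≤ d := by
        rw [← hpd, hc]; exact le_add_right le_rfl
      have hp2 : p.2 = d - Finsupp.single c i := by
        rw [← hc]
        exact eq_tsub_of_add_eq (by rw [add_comm]; exact hpd)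
      simp only [hA, Finset.mem_image, Finset.mem_filter, Finsupp.mem_support_iff]
      refine ⟨c, ⟨?_, Finsupp.single_le_iff.mp hle⟩, ?_⟩
      · have := Finsupp.single_le_iff.mp hle; omega
      · rw [← hp2, ← hc]
    · exact zero_mul _

/-- Coefficient of `X c ^ i * F`. -/
lemma coeff_X_pow_mul' (c i : ℕ) (F : MvPowerSeries ℕ ℤ) (d : ℕ →₀ ℕ) :
    MvPowerSeries.coeff d ((MvPowerSeries.X c : MvPowerSeries ℕ ℤ) ^ i * F) =
      if i ≤ d c then MvPowerSeries.coeff (d - Finsupp.single c i) F else 0 := by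
  classical
  rw [MvPowerSeries.X_pow_eq, MvPowerSeries.coeff_monomial_mul]
  simp [Finsupp.single_le_iff]

/-- The coefficient of the chromatic symmetric function splits as a sum over
the possible colors of a fixed vertex. -/
lemma coeff_csf_eq_sum_coeff_Zcsf {V : Type} [Fintype V] (T : SimpleGraph V)
    (v : V) (d : ℕ →₀ ℕ) :
    MvPowerSeries.coeff d (csf T) = ∑ c ∈ d.support, MvPowerSeries.coeff d (Zcsf T v c) := by
  classical
  set S : Set (V → ℕ) := {κ : V → ℕ |
    T.IsProperNatColoring κ ∧ ∀ c : ℕ, (κ ⁻¹' {c}).ncard = d c} with hS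
  set Sc : ℕ → Set (V → ℕ) := fun c => {κ : V → ℕ |
    T.IsProperNatColoring κ ∧ κ v = c ∧ ∀ c' : ℕ, (κ ⁻¹' {c'}).ncard = d c'} with hSc
  have hmem : ∀ κ ∈ S, ∀ x : V, κ x ∈ d.support := by
    intro κ hκ x
    rw [Finsupp.mem_support_iff, ← hκ.2 (κ x)]
    have hne : (κ ⁻¹' {κ x}).Nonempty := ⟨x, rfl⟩
    have := (Set.ncard_pos (Set.toFinite _)).mpr hne
    omega
  have hSfin : S.Finite := by
    apply Set.Finite.subset (Set.Finite.pi (fun _ : V => (d.support : Set ℕ).toFinite))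
    intro κ hκ
    rw [Set.mem_univ_pi]
    intro x
    exact Finset.mem_coe.mpr (hmem κ hκ x)
  have hScfin : ∀ c, (Sc c).Finite := fun c =>
    hSfin.subset (fun κ hκ => ⟨hκ.1, hκ.2.2⟩)
  have hunion : hSfin.toFinset = d.support.biUnion (fun c => (hScfin c).toFinset) := by
    ext κ
    simp only [Set.Finite.mem_toFinset, Finset.mem_biUnion]
    constructor
    · intro hκ
      exact ⟨κ v, hmem κ hκ v, ⟨hκ.1, rfl, hκ.2⟩⟩
    · rintro ⟨c, -, hκ⟩
      exact ⟨hκ.1, hκ.2.2⟩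
  have hcard : S.ncard = ∑ c ∈ d.support, (Sc c).ncard := by
    rw [Set.ncard_eq_toFinset_card _ hSfin, hunion, Finset.card_biUnion]
    · exact Finset.sum_congr rfl fun c _ => (Set.ncard_eq_toFinset_card _ (hScfin c)).symm
    · intro c _ c' _ hne
      simp only [Finset.disjoint_left, Set.Finite.mem_toFinset]
      intro κ h1 h2
      exact hne (h1.2.1 ▸ h2.2.1 ▸ rfl)
  show ((S.ncard : ℕ) : ℤ) = ∑ c ∈ d.support, (((Sc c).ncard : ℕ) : ℤ)
  rw [hcard]
  push_cast
  rfl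

/-- If `T` is a tree on `n ≥ 1` vertices with vertex `v` and `F_1, …, F_n` are
symmetric power series with `Z_T^v(c) = Σ_{i=1}^n x_c^i F_i` for all colors `c`, then
`X_T = Σ_{i=1}^n p_i F_i`, where `p_i` is the `i`-th power-sum series. -/
theorem csf_eq_sum_powerSum_mul {V : Type} [Fintype V]
    (T : SimpleGraph V) (hT : T.IsTree) (n : ℕ) (hn : Fintype.card V = n)
    (h1 : 1 ≤ n) (v : V) (F : ℕ → MvPowerSeries ℕ ℤ)
    (hsym : ∀ i ∈ Finset.Icc 1 n, (F i).IsSymmetricFun)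
    (hZ : ∀ c : ℕ, Zcsf T v c =
      ∑ i ∈ Finset.Icc 1 n, (MvPowerSeries.X c : MvPowerSeries ℕ ℤ) ^ i * F i) :
    csf T = ∑ i ∈ Finset.Icc 1 n, pSum i * F i := by
  classical
  have : Nonempty V := by
    rw [← Fintype.card_pos_iff]; omega
  apply MvPowerSeries.ext
  intro d
  rw [map_sum, coeff_csf_eq_sum_coeff_Zcsf T v d]
  have hL : ∀ c ∈ d.support, MvPowerSeries.coeff d (Zcsf T v c) =
      ∑ i ∈ Finset.Icc 1 n, if i ≤ d c then
        MvPowerSeries.coeff (d - Finsupp.single c i) (F i) else 0 := by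
    intro c _
    rw [hZ c, map_sum]
    exact Finset.sum_congr rfl fun i _ => coeff_X_pow_mul' c i (F i) d
  rw [Finset.sum_congr rfl hL, Finset.sum_comm]
  refine Finset.sum_congr rfl fun i hi => ?_
  rw [coeff_pSum_mul i (Finset.mem_Icc.mp hi).1 (F i) d, Finset.sum_filter]
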